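/- There exists a discrete-time system and a set A that is 2-step control invariant but not control invariant (not 1-step control invariant). -/

import Mathlib

open Set

variable {α β : Type*}

/-- `x` is an equilibrium state: it lies in `X` and can be held fixed by some admissible control. -/
def IsEquilibrium (f : α → β → α) (X : Set α) (U : Set β) (x : α) : Prop :=
  x ∈ X ∧ ∃ u ∈ U, f x u = x

/-- Infinite-time backward-reachable set of the equilibrium set `S`:
states in `X` from which some admissible trajectory staying in `X` reaches an equilibrium. -/
def BackReach (f : α → β → α) (X : Set α) (U : Set β) : Set α :=
  {x0 | x0 ∈ X ∧ ∃ (k : ℕ) (x : ℕ → α) (u : ℕ → β),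
    x 0 = x0 ∧ (∀ i ≤ k, x (i + 1) = f (x i) (u i)) ∧
    (∀ i ≤ k, x i ∈ X) ∧ (∀ i ≤ k, u i ∈ U) ∧
    IsEquilibrium f X U (x (k + 1))}

/-- Classic control invariance of `A`. -/
def CtrlInv (f : α → β → α) (U : Set β) (A : Set α) : Prop :=
  ∀ x ∈ A, ∃ u ∈ U, f x u ∈ A

/-- `N`-step control invariance of `A ⊆ X`. -/
def NStepInv (f : α → β → α) (X : Set α) (U : Set β) (N : ℕ) (A : Set α) : Prop :=
  ∀ x0 ∈ A, ∃ (k : ℕ) (x : ℕ → α) (u : ℕ → β), 1 ≤ k ∧ k ≤ N ∧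
    x 0 = x0 ∧ (∀ i < k, x (i + 1) = f (x i) (u i)) ∧
    (∀ i < k, x i ∈ X) ∧ (∀ i < k, u i ∈ U) ∧ x k ∈ A

/-- There is a system and a set `A` that is 2-step control invariant but not control
invariant (not 1-step control invariant). -/
theorem exists_twoStep_not_oneStep :
    ∃ (f : Fin 2 → Unit → Fin 2) (X : Set (Fin 2)) (U : Set Unit) (A : Set (Fin 2)),
      NStepInv f X U 2 A ∧ ¬ NStepInv f X U 1 A := by
  refine ⟨fun x _ => x + 1, Set.univ, Set.univ, {0}, ?_, ?_⟩
  · open Fin.CommRing Fin.NatCast in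
    intro x0 hx0
    refine ⟨2, fun i => x0 + i, fun _ => (), one_le_two, le_refl _, by simp, ?_, ?_, ?_, ?_⟩
    · intro i _; push_cast; ring
    · intro i _; trivial
    · intro i _; trivial
    · simp at hx0; simp [hx0]
  · intro h
    obtain ⟨k, x, u, hk1, hk2, hx0, hstep, -, -, hxk⟩ := h 0 rfl
    interval_cases k
    have := hstep 0 (by norm_num)
    rw [hx0] at this
    rw [this] at hxk
    simp at hxk
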